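/- Let U ⊆ ℝⁿ be bounded open, T > 0, and w ∈ C²,¹(U_T) ∩ C(closure U_T) satisfy w_t − Q̃w ≤ 0 in U_T, with Q̃v = [Δv − D²v(Dv,Dv)/(1+|Dv|²) + |Dv|²]/√(1+|Dv|²). Then max over closure(U_T) of w equals max over the parabolic boundary Γ_T of w. -/

import Mathlib

open Real Set

/-- Partial derivative of `f` in the `i`-th coordinate direction. -/
noncomputable def pd {n : ℕ} (f : EuclideanSpace ℝ (Fin n) → ℝ) (i : Fin n)
    (x : EuclideanSpace ℝ (Fin n)) : ℝ :=
  fderiv ℝ f x (EuclideanSpace.single i 1)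

/-- Squared norm of the gradient of `f` at `x`. -/
noncomputable def gradNormSq {n : ℕ} (f : EuclideanSpace ℝ (Fin n) → ℝ)
    (x : EuclideanSpace ℝ (Fin n)) : ℝ :=
  ∑ i, (pd f i x) ^ 2

/-- The divergence of the relativistic heat flux `u Du / √(u² + |Du|²)`. -/
noncomputable def relDiv {n : ℕ} (u : EuclideanSpace ℝ (Fin n) → ℝ)
    (x : EuclideanSpace ℝ (Fin n)) : ℝ :=
  ∑ i, pd (fun y => u y * pd u i y / Real.sqrt ((u y) ^ 2 + gradNormSq u y)) i x

/-- The transformed quasilinear operator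
`Q w = Δw − D²w(Dw,Dw)/(1+|Dw|²) + |Dw|²`. -/
noncomputable def Qop {n : ℕ} (w : EuclideanSpace ℝ (Fin n) → ℝ)
    (x : EuclideanSpace ℝ (Fin n)) : ℝ :=
  (∑ i, pd (pd w i) i x)
    - (∑ i, ∑ j, pd (pd w i) j x * pd w i x * pd w j x) / (1 + gradNormSq w x)
    + gradNormSq w x

/-- The normalized operator `Q̃ w = Q w / √(1+|Dw|²)`. -/
noncomputable def Qtil {n : ℕ} (w : EuclideanSpace ℝ (Fin n) → ℝ)
    (x : EuclideanSpace ℝ (Fin n)) : ℝ :=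
  Qop w x / Real.sqrt (1 + gradNormSq w x)

section Aux
open Filter Topology

private lemma aux_time {f : ℝ → ℝ} {a t₀ d : ℝ} (h : a < t₀)
    (hle : ∀ t ∈ Set.Ioc a t₀, f t ≤ f t₀) (hd : HasDerivAt f d t₀) : 0 ≤ d := by
  have hslope := hasDerivAt_iff_tendsto_slope.mp hd
  have hslope' : Tendsto (slope f t₀) (𝓝[<] t₀) (𝓝 d) :=
    hslope.mono_left (nhdsWithin_mono _ (fun x hx => ne_of_lt hx))
  refine ge_of_tendsto hslope' ?_
  filter_upwards [Ioo_mem_nhdsLT_of_mem (show t₀ ∈ Ioc a t₀ from ⟨h, le_rfl⟩)] with t ht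
  have h1 : f t - f t₀ ≤ 0 := sub_nonpos.mpr (hle t ⟨ht.1, ht.2.le⟩)
  have h2 : t - t₀ ≤ 0 := (sub_neg.mpr ht.2).le
  rw [slope_def_field, ← neg_div_neg_eq]
  exact div_nonneg (by linarith) (by linarith)

private lemma aux_second {g G : ℝ → ℝ} {c : ℝ}
    (hg : ∀ᶠ s in 𝓝 (0:ℝ), HasDerivAt g (G s) s)
    (hG : HasDerivAt G c 0) (hmax : IsLocalMax g 0) : c ≤ 0 := by
  by_contra hc
  push_neg at hc
  have hG0 : G 0 = 0 := by
    obtain ⟨s, hs0, _, hsm⟩ := eventually_nhds_iff.mp hg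
    exact hmax.hasDerivAt_eq_zero (hs0 0 hsm)
  have hslope := hasDerivAt_iff_tendsto_slope.mp hG
  have hslope' : Tendsto (slope G 0) (𝓝[>] (0:ℝ)) (𝓝 c) :=
    hslope.mono_left (nhdsWithin_mono _ (fun x hx => ne_of_gt hx))
  have hpos : ∀ᶠ s in 𝓝[>] (0:ℝ), 0 < G s := by
    filter_upwards [hslope'.eventually (eventually_gt_nhds hc),
      self_mem_nhdsWithin] with s hs hs'
    rw [slope_def_field, hG0, sub_zero, sub_zero] at hs
    have hsp : (0:ℝ) < s := hs'
    have := mul_pos hs hsp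
    rwa [div_mul_cancel₀ _ (ne_of_gt hsp)] at this
  obtain ⟨u, hu', huG⟩ := mem_nhdsGT_iff_exists_Ioo_subset.mp hpos
  have hu : (0:ℝ) < u := hu'
  obtain ⟨δ, hδ0, hδ⟩ := Metric.eventually_nhds_iff.mp (hg.and hmax)
  set b := min u δ / 2 with hb
  have hbu : b < u := by
    have : b ≤ u / 2 := by
      have := min_le_left u δ; simp only [hb]; linarith
    linarith
  have hbδ : b < δ := by
    have : b ≤ δ / 2 := by
      have := min_le_right u δ; simp only [hb]; linarith
    linarith
  have hb0 : 0 < b := by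
    have h1 : 0 < min u δ := lt_min hu hδ0
    simp only [hb]; linarith
  have hIcc : Icc (0:ℝ) b ⊆ Metric.ball (0:ℝ) δ := by
    intro s hs
    rw [Metric.mem_ball, Real.dist_eq, sub_zero, abs_lt]
    exact ⟨by linarith [hs.1], by linarith [hs.2]⟩
  have hcont : ContinuousOn g (Icc 0 b) := fun s hs =>
    ((hδ (hIcc hs)).1.continuousAt).continuousWithinAt
  have hmono : StrictMonoOn g (Icc 0 b) := by
    refine strictMonoOn_of_deriv_pos (convex_Icc 0 b) hcont ?_
    intro s hs
    rw [interior_Icc] at hs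
    have hd : HasDerivAt g (G s) s := (hδ (hIcc ⟨hs.1.le, hs.2.le⟩)).1
    rw [hd.deriv]
    exact huG ⟨hs.1, hs.2.trans hbu⟩
  have h1 : g 0 < g b := hmono (left_mem_Icc.mpr hb0.le) (right_mem_Icc.mpr hb0.le) hb0
  have h2 : g b ≤ g 0 := (hδ (hIcc (right_mem_Icc.mpr hb0.le))).2
  linarith

private lemma aux_key2 {n : ℕ} {f : EuclideanSpace ℝ (Fin n) → ℝ}
    {U : Set (EuclideanSpace ℝ (Fin n))} (hU : IsOpen U)
    {x : EuclideanSpace ℝ (Fin n)} (hx : x ∈ U)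
    (hf : ContDiffOn ℝ 2 f U) (hmax : IsLocalMax f x)
    (v : EuclideanSpace ℝ (Fin n)) :
    fderiv ℝ (fun y => fderiv ℝ f y v) x v ≤ 0 := by
  set L : ℝ → EuclideanSpace ℝ (Fin n) := fun s => x + s • v with hLdef
  have hLc : Continuous L := continuous_const.add (continuous_id.smul continuous_const)
  have hL : ∀ s : ℝ, HasDerivAt L v s := by
    intro s
    simpa [hLdef] using (((hasDerivAt_id s).smul_const v).const_add x)
  have hL0 : L 0 = x := by simp [hLdef]
  have hS : IsOpen (L ⁻¹' U) := hU.preimage hLc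
  have h0S : (0:ℝ) ∈ L ⁻¹' U := by simp [hLdef, hx]
  set F : EuclideanSpace ℝ (Fin n) → ℝ := fun y => fderiv ℝ f y v with hFdef
  set G : ℝ → ℝ := fun s => F (L s) with hGdef
  set g : ℝ → ℝ := fun s => f (L s) with hgdef
  have hg : ∀ᶠ s in 𝓝 (0:ℝ), HasDerivAt g (G s) s := by
    filter_upwards [hS.mem_nhds h0S] with s hs
    have hdf : DifferentiableAt ℝ f (L s) :=
      ((hf.differentiableOn (by norm_num)).differentiableAt (hU.mem_nhds hs))
    exact hdf.hasFDerivAt.comp_hasDerivAt s (hL s)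
  have hf' : ContDiffOn ℝ 1 (fderiv ℝ f) U := hf.fderiv_of_isOpen hU (by norm_num)
  have hF : DifferentiableAt ℝ F x :=
    ((hf'.clm_apply contDiffOn_const).differentiableOn (by norm_num)).differentiableAt
      (hU.mem_nhds hx)
  have hG : HasDerivAt G (fderiv ℝ F x v) 0 := by
    have hF' : HasFDerivAt F (fderiv ℝ F x) (L 0) := hL0 ▸ hF.hasFDerivAt
    exact hF'.comp_hasDerivAt 0 (hL 0)
  have hmaxg : IsLocalMax g 0 := by
    have hLt : Tendsto L (𝓝 0) (𝓝 x) := by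
      have := hLc.tendsto 0
      rwa [hL0] at this
    filter_upwards [hLt.eventually hmax] with s hs
    simpa [hgdef, hL0] using hs
  exact aux_second hg hG hmaxg

end Aux

/-- weak maximum principle: a subsolution of `w_t = Q̃ w`
attains its maximum over the closed parabolic cylinder on the parabolic
boundary. -/
theorem stmt17 {n : ℕ} (U : Set (EuclideanSpace ℝ (Fin n)))
    (hU : IsOpen U) (hbdd : Bornology.IsBounded U) (T : ℝ) (hT : 0 < T)
    (w : EuclideanSpace ℝ (Fin n) → ℝ → ℝ)
    (hwx : ∀ t ∈ Set.Ioc 0 T, ContDiffOn ℝ 2 (fun y => w y t) U)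
    (hwt : ∀ x ∈ U, ∀ t ∈ Set.Ioc 0 T, DifferentiableAt ℝ (w x) t)
    (hwc : ContinuousOn (fun q : EuclideanSpace ℝ (Fin n) × ℝ => w q.1 q.2)
      (closure (U ×ˢ Set.Ioc 0 T)))
    (hsub : ∀ x ∈ U, ∀ t ∈ Set.Ioc 0 T,
        deriv (w x) t - Qtil (fun y => w y t) x ≤ 0) :
    sSup ((fun q : EuclideanSpace ℝ (Fin n) × ℝ => w q.1 q.2) ''
        closure (U ×ˢ Set.Ioc 0 T))
      = sSup ((fun q : EuclideanSpace ℝ (Fin n) × ℝ => w q.1 q.2) ''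
        (closure (U ×ˢ Set.Ioc 0 T) \ U ×ˢ Set.Ioc 0 T)) := by

  classical
  rcases Set.eq_empty_or_nonempty U with hUe | ⟨z, hz⟩
  · simp [hUe]
  have hclos : closure (U ×ˢ Set.Ioc 0 T) = closure U ×ˢ Set.Icc 0 T := by
    rw [closure_prod_eq, closure_Ioc hT.ne]
  set W := fun q : EuclideanSpace ℝ (Fin n) × ℝ => w q.1 q.2 with hW
  set K := closure (U ×ˢ Set.Ioc 0 T) with hK
  have hKc : IsCompact K := by
    rw [hclos]
    exact hbdd.isCompact_closure.prod isCompact_Icc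
  have hKmem : ∀ x ∈ U, ∀ t ∈ Set.Icc (0:ℝ) T, (x, t) ∈ K := by
    intro x hx t ht
    rw [hclos]
    exact ⟨subset_closure hx, ht⟩
  have hx0K : (z, (0:ℝ)) ∈ K := hKmem z hz 0 ⟨le_rfl, hT.le⟩
  set Γ := K \ U ×ˢ Set.Ioc 0 T with hΓ
  have hzΓ : (z, (0:ℝ)) ∈ Γ := ⟨hx0K, fun h => lt_irrefl (0:ℝ) h.2.1⟩
  have hKne : K.Nonempty := ⟨_, hx0K⟩
  have hbddK : BddAbove (W '' K) := (hKc.image_of_continuousOn hwc).bddAbove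
  have hbddΓ : BddAbove (W '' Γ) := hbddK.mono (image_mono diff_subset)
  have hneΓ : (W '' Γ).Nonempty := ⟨_, _, hzΓ, rfl⟩
  -- key estimate
  have hkey : ∀ ε : ℝ, 0 < ε → ∀ q ∈ K, W q ≤ sSup (W '' Γ) + ε * T := by
    intro ε hε q hq
    set v := fun q : EuclideanSpace ℝ (Fin n) × ℝ => W q - ε * q.2 with hv
    have hvc : ContinuousOn v K :=
      hwc.sub ((continuous_const.mul continuous_snd).continuousOn)
    obtain ⟨p, hpK, hpmax⟩ := hKc.exists_isMaxOn hKne hvc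
    have hpnot : p ∉ U ×ˢ Set.Ioc 0 T := by
      rintro ⟨hx₁, ht₁⟩
      obtain ⟨x₁, t₁⟩ := p
      simp only at hx₁ ht₁
      set f := fun y => w y t₁ with hf
      have hmaxf : IsLocalMax f x₁ := by
        filter_upwards [hU.mem_nhds hx₁] with y hy
        have hyK : (y, t₁) ∈ K := hKmem y hy t₁ ⟨ht₁.1.le, ht₁.2⟩
        have h' : w y t₁ - ε * t₁ ≤ w x₁ t₁ - ε * t₁ := hpmax hyK
        show f y ≤ f x₁
        simp only [hf]
        linarith
      have hcd : ContDiffOn ℝ 2 f U := hwx t₁ ht₁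
      have hgrad : fderiv ℝ f x₁ = 0 := hmaxf.fderiv_eq_zero
      have hpd : ∀ i, pd f i x₁ = 0 := by
        intro i; rw [pd, hgrad]; simp
      have hgns : gradNormSq f x₁ = 0 := by
        simp [gradNormSq, hpd]
      have hsec : ∀ i : Fin n, pd (pd f i) i x₁ ≤ 0 := by
        intro i
        have h := aux_key2 hU hx₁ hcd hmaxf (EuclideanSpace.single i 1)
        have he : pd (pd f i) i x₁
            = fderiv ℝ (fun y => fderiv ℝ f y (EuclideanSpace.single i 1)) x₁
              (EuclideanSpace.single i 1) := rfl
        rw [he]; exact h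
      have hQ : Qtil f x₁ ≤ 0 := by
        have hQop : Qop f x₁ ≤ 0 := by
          have hsum : (∑ i, ∑ j, pd (pd f i) j x₁ * pd f i x₁ * pd f j x₁) = 0 := by
            apply Finset.sum_eq_zero; intro i _
            apply Finset.sum_eq_zero; intro j _
            rw [hpd i]; ring
          rw [Qop, hsum, hgns]
          simpa using Finset.sum_nonpos (fun i _ => hsec i)
        have h10 : (1:ℝ) + 0 = 1 := by norm_num
        rw [Qtil, hgns, h10, Real.sqrt_one, div_one]
        exact hQop
      have hder : HasDerivAt (w x₁) (deriv (w x₁) t₁) t₁ :=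
        (hwt x₁ hx₁ t₁ ht₁).hasDerivAt
      have hft : HasDerivAt (fun t => w x₁ t - ε * t) (deriv (w x₁) t₁ - ε) t₁ := by
        have h2 : HasDerivAt (fun t : ℝ => ε * t) ε t₁ := by
          simpa using (hasDerivAt_id t₁).const_mul ε
        exact hder.sub h2
      have hle : ∀ t ∈ Set.Ioc 0 t₁, w x₁ t - ε * t ≤ w x₁ t₁ - ε * t₁ := by
        intro t ht
        have htK : (x₁, t) ∈ K := hKmem x₁ hx₁ t ⟨ht.1.le, ht.2.trans ht₁.2⟩
        exact hpmax htK
      have htime : 0 ≤ deriv (w x₁) t₁ - ε := aux_time ht₁.1 hle hft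
      have := hsub x₁ hx₁ t₁ ht₁
      rw [← hf] at this
      linarith
    have hpΓ : p ∈ Γ := ⟨hpK, hpnot⟩
    have hWp : W p ≤ sSup (W '' Γ) := le_csSup hbddΓ ⟨p, hpΓ, rfl⟩
    have hq2 : q.2 ∈ Set.Icc (0:ℝ) T := by
      rw [hclos] at hq; exact hq.2
    have hp2 : p.2 ∈ Set.Icc (0:ℝ) T := by
      rw [hclos] at hpK; exact hpK.2
    have hvq : v q ≤ v p := hpmax hq
    simp only [hv] at hvq
    nlinarith [hq2.1, hq2.2, hp2.1, mul_le_mul_of_nonneg_left hq2.2 hε.le,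
      mul_nonneg hε.le hp2.1]
  apply le_antisymm
  · refine csSup_le (hKne.image _) ?_
    rintro b ⟨q, hq, rfl⟩
    by_contra hgt
    push_neg at hgt
    have hε : 0 < (W q - sSup (W '' Γ)) / (2 * T) :=
      div_pos (by linarith) (by linarith)
    have h1 := hkey _ hε q hq
    have heq : (W q - sSup (W '' Γ)) / (2 * T) * T = (W q - sSup (W '' Γ)) / 2 := by
      field_simp
    rw [heq] at h1
    linarith
  · exact csSup_le_csSup hbddK hneΓ (image_mono diff_subset)
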